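/- Fix ν > 0, ρ > 0, and matrices A₁, …, A_m ∈ ℂ^{n×n} such that ‖(1/m)·Σ_{i=1}^m (p* Aᵢ* q)·Aᵢ − 2 q p*‖ < ν for all unit vectors p, q ∈ ℂⁿ. Define g(z) = (1/m)·Σ_{i=1}^m [(z* Aᵢ* z − x* Aᵢ* x)·Aᵢ z + (z* Aᵢ z − x* Aᵢ x)·Aᵢ* z]. Then for all h, x ∈ ℂⁿ with ‖h‖₂/‖x‖₂ ≤ ρ, taking z = x + h: ‖g(z)‖₂² ≤ c₂(ν, ρ)·‖h‖₂²·‖x‖₂⁴, where c₂(ν, ρ) = 4·(2 + ν)²·(ρ² + 3ρ + 2)². -/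

import Mathlib

open MeasureTheory ProbabilityTheory Matrix Complex Finset

noncomputable section

/-- The vector in `ℝ^{2n²}` of real and imaginary parts of the entries of a complex matrix. -/
def coeffVec {n : ℕ} (A : Matrix (Fin n) (Fin n) ℂ) : Fin n × Fin n × Fin 2 → ℝ :=
  fun p => if p.2.2 = (0 : Fin 2) then (A p.1 p.2.1).re else (A p.1 p.2.1).im

/-- A real random variable is sub-Gaussian: its tails are dominated by a Gaussian tail. -/
def IsSubGaussianRV {Ω : Type} [MeasureSpace Ω] (X : Ω → ℝ) : Prop :=
  ∃ K > 0, ∀ t : ℝ, 0 ≤ t →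
    (ℙ {ω | t ≤ |X ω|}).toReal ≤ 2 * Real.exp (-(t ^ 2) / K ^ 2)

/-- The rotation-invariant sub-Gaussian measurement model: the matrices `A i` are i.i.d.,
the vector of real/imaginary parts of the entries has a rotation-invariant distribution,
all one-dimensional marginals are sub-Gaussian, and each coordinate has unit variance. -/
structure RotInvSubGaussian {Ω : Type} [MeasureSpace Ω] {n m : ℕ}
    (A : Fin m → Ω → Matrix (Fin n) (Fin n) ℂ) : Prop where
  prob : IsProbabilityMeasure (ℙ : Measure Ω)
  meas : ∀ i, Measurable fun ω => coeffVec (A i ω)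
  indep : iIndepFun (fun i ω => coeffVec (A i ω)) ℙ
  ident : ∀ i j, Measure.map (fun ω => coeffVec (A i ω)) ℙ
    = Measure.map (fun ω => coeffVec (A j ω)) ℙ
  rotInv : ∀ (i : Fin m) (O : Matrix (Fin n × Fin n × Fin 2) (Fin n × Fin n × Fin 2) ℝ),
    Oᵀ * O = 1 →
    Measure.map (fun ω => O.mulVec (coeffVec (A i ω))) ℙ
      = Measure.map (fun ω => coeffVec (A i ω)) ℙ
  subGaussian : ∀ (i : Fin m) (g : Fin n × Fin n × Fin 2 → ℝ),
    IsSubGaussianRV (fun ω => g ⬝ᵥ coeffVec (A i ω))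
  unitVar : ∀ (i : Fin m) (k : Fin n × Fin n × Fin 2), ∫ ω, (coeffVec (A i ω) k) ^ 2 = 1

/-- A matrix acting on `EuclideanSpace`. -/
def mApp {n : ℕ} (M : Matrix (Fin n) (Fin n) ℂ) (v : EuclideanSpace ℂ (Fin n)) :
    EuclideanSpace ℂ (Fin n) :=
  Matrix.toEuclideanLin M v

/-- `quadForm M u v = u* M v`. -/
def quadForm {n : ℕ} (M : Matrix (Fin n) (Fin n) ℂ) (u v : EuclideanSpace ℂ (Fin n)) : ℂ :=
  inner ℂ u (mApp M v)

/-- The spectral (operator) norm of a complex matrix. -/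
def specNorm {n : ℕ} (M : Matrix (Fin n) (Fin n) ℂ) : ℝ :=
  ‖LinearMap.toContinuousLinearMap (Matrix.toEuclideanLin M)‖

/-- The outer product `q p*`. -/
def outer {n : ℕ} (q p : EuclideanSpace ℂ (Fin n)) : Matrix (Fin n) (Fin n) ℂ :=
  Matrix.vecMulVec (fun r => q r) (fun c => starRingEnd ℂ (p c))

/-- `(1/m) Σᵢ (p* Aᵢ* q) Aᵢ − 2 q p*`. -/
def Gmat {n m : ℕ} (A : Fin m → Matrix (Fin n) (Fin n) ℂ)
    (p q : EuclideanSpace ℂ (Fin n)) : Matrix (Fin n) (Fin n) ℂ :=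
  (m : ℂ)⁻¹ • (∑ i, quadForm (A i)ᴴ p q • A i) - (2 : ℂ) • outer q p

/-- Squared distance up to a global phase. -/
def distSq {n : ℕ} (z x : EuclideanSpace ℂ (Fin n)) : ℝ :=
  ‖z‖ ^ 2 + ‖x‖ ^ 2 - 2 * ‖(inner ℂ z x : ℂ)‖

/-- The Wirtinger flow gradient of the loss `f(z) = (1/m) Σᵢ |z* Aᵢ z − x* Aᵢ x|²`. -/
def wfGrad {n m : ℕ} (A : Fin m → Matrix (Fin n) (Fin n) ℂ)
    (x z : EuclideanSpace ℂ (Fin n)) : EuclideanSpace ℂ (Fin n) :=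
  (m : ℂ)⁻¹ • ∑ i,
    ((quadForm (A i)ᴴ z z - quadForm (A i)ᴴ x x) • mApp (A i) z
      + (quadForm (A i) z z - quadForm (A i) x x) • mApp (A i)ᴴ z)

/-- The spectral initialization matrix `S = (1/m) Σᵢ ȳᵢ Aᵢ` with `yᵢ = x* Aᵢ x`. -/
def Smat {n m : ℕ} (A : Fin m → Matrix (Fin n) (Fin n) ℂ)
    (x : EuclideanSpace ℂ (Fin n)) : Matrix (Fin n) (Fin n) ℂ :=
  (m : ℂ)⁻¹ • ∑ i, starRingEnd ℂ (quadForm (A i) x x) • A i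

/-- `v` is a unit right singular vector of `S` associated with the largest singular value
(which equals the spectral norm). -/
def TopRightSingVec {n : ℕ} (S : Matrix (Fin n) (Fin n) ℂ)
    (v : EuclideanSpace ℂ (Fin n)) : Prop :=
  ‖v‖ = 1 ∧ ∃ u : EuclideanSpace ℂ (Fin n), ‖u‖ = 1 ∧
    mApp S v = (specNorm S : ℂ) • u ∧ mApp Sᴴ u = (specNorm S : ℂ) • v

end


section AuxGradBound

variable {n m : ℕ}

private lemma mApp_norm_le' (M : Matrix (Fin n) (Fin n) ℂ) (v : EuclideanSpace ℂ (Fin n)) :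
    ‖mApp M v‖ ≤ specNorm M * ‖v‖ := by
  have := (LinearMap.toContinuousLinearMap (Matrix.toEuclideanLin M)).le_opNorm v
  simpa only [mApp, specNorm, LinearMap.coe_toContinuousLinearMap'] using this

private lemma specNorm_nonneg' (M : Matrix (Fin n) (Fin n) ℂ) : 0 ≤ specNorm M := norm_nonneg _

private lemma specNorm_smul' (c : ℂ) (M : Matrix (Fin n) (Fin n) ℂ) :
    specNorm (c • M) = ‖c‖ * specNorm M := by
  rw [specNorm, specNorm, _root_.map_smul, _root_.map_smul]
  exact norm_smul c (LinearMap.toContinuousLinearMap (Matrix.toEuclideanLin M))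

private lemma mApp_smul' (c : ℂ) (M : Matrix (Fin n) (Fin n) ℂ) (v : EuclideanSpace ℂ (Fin n)) :
    mApp (c • M) v = c • mApp M v := by simp [mApp, _root_.map_smul]

private lemma mApp_sub' (M N : Matrix (Fin n) (Fin n) ℂ) (v : EuclideanSpace ℂ (Fin n)) :
    mApp (M - N) v = mApp M v - mApp N v := by simp [mApp, map_sub]

private lemma mApp_sum' (s : Finset (Fin m)) (M : Fin m → Matrix (Fin n) (Fin n) ℂ)
    (v : EuclideanSpace ℂ (Fin n)) :
    mApp (∑ i ∈ s, M i) v = ∑ i ∈ s, mApp (M i) v := by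
  simp [mApp, map_sum, LinearMap.sum_apply]

private lemma mApp_outer' (q p v : EuclideanSpace ℂ (Fin n)) :
    mApp (outer q p) v = (inner ℂ p v : ℂ) • q := by
  ext j
  simp [mApp, outer, Matrix.toEuclideanLin_apply, Matrix.mulVec, Matrix.vecMulVec,
    dotProduct, PiLp.inner_apply, Finset.mul_sum, mul_comm, mul_left_comm,
    RCLike.inner_apply]

private lemma quadForm_conj' (M : Matrix (Fin n) (Fin n) ℂ) (u v : EuclideanSpace ℂ (Fin n)) :
    quadForm Mᴴ u v = starRingEnd ℂ (quadForm M v u) := by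
  rw [quadForm, quadForm, mApp, mApp, Matrix.toEuclideanLin_conjTranspose_eq_adjoint,
    LinearMap.adjoint_inner_right, ← inner_conj_symm]

private lemma inner_mApp_conjT' (M : Matrix (Fin n) (Fin n) ℂ) (u v : EuclideanSpace ℂ (Fin n)) :
    (inner ℂ u (mApp Mᴴ v) : ℂ) = starRingEnd ℂ (inner ℂ v (mApp M u) : ℂ) := by
  rw [mApp, mApp, Matrix.toEuclideanLin_conjTranspose_eq_adjoint,
    LinearMap.adjoint_inner_right, ← inner_conj_symm]

private lemma quadForm_smul_left' (M : Matrix (Fin n) (Fin n) ℂ) (a : ℂ)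
    (p q : EuclideanSpace ℂ (Fin n)) :
    quadForm M (a • p) q = starRingEnd ℂ a * quadForm M p q := by
  simp [quadForm, inner_smul_left, mul_comm]

private lemma quadForm_smul_right' (M : Matrix (Fin n) (Fin n) ℂ) (b : ℂ)
    (p q : EuclideanSpace ℂ (Fin n)) :
    quadForm M p (b • q) = b * quadForm M p q := by
  simp [quadForm, mApp, _root_.map_smul, inner_smul_right]

private lemma quadForm_add_left' (M : Matrix (Fin n) (Fin n) ℂ)
    (p p' q : EuclideanSpace ℂ (Fin n)) :
    quadForm M (p + p') q = quadForm M p q + quadForm M p' q := by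
  simp [quadForm, inner_add_left]

private lemma quadForm_add_right' (M : Matrix (Fin n) (Fin n) ℂ)
    (p q q' : EuclideanSpace ℂ (Fin n)) :
    quadForm M p (q + q') = quadForm M p q + quadForm M p q' := by
  simp [quadForm, mApp, map_add, inner_add_right]

private lemma quadForm_delta' (M : Matrix (Fin n) (Fin n) ℂ)
    (x h : EuclideanSpace ℂ (Fin n)) :
    quadForm M (x + h) (x + h) - quadForm M x x = quadForm M h (x + h) + quadForm M x h := by
  rw [quadForm_add_left', quadForm_add_right', quadForm_add_right']
  ring

private lemma outer_smul_left' (b : ℂ) (q p : EuclideanSpace ℂ (Fin n)) :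
    outer (b • q) p = b • outer q p := by
  ext i j; simp [outer, Matrix.vecMulVec, mul_assoc]

private lemma outer_smul_right' (a : ℂ) (q p : EuclideanSpace ℂ (Fin n)) :
    outer q (a • p) = starRingEnd ℂ a • outer q p := by
  ext i j; simp [outer, Matrix.vecMulVec, _root_.map_mul, mul_comm, mul_left_comm]

private lemma Gmat_smul' (A : Fin m → Matrix (Fin n) (Fin n) ℂ) (a b : ℂ)
    (p q : EuclideanSpace ℂ (Fin n)) :
    Gmat A (a • p) (b • q) = (starRingEnd ℂ a * b) • Gmat A p q := by
  have h1 : ∀ i : Fin m, quadForm (A i)ᴴ (a • p) (b • q) • A i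
      = (starRingEnd ℂ a * b) • (quadForm (A i)ᴴ p q • A i) := by
    intro i
    rw [quadForm_smul_left', quadForm_smul_right', smul_smul, mul_assoc]
  unfold Gmat
  rw [smul_sub]
  congr 1
  · simp only [h1, ← Finset.smul_sum]
    rw [smul_comm]
  · rw [outer_smul_left', outer_smul_right', smul_smul, smul_smul, smul_smul]
    congr 1
    ring

private lemma inner_mApp_Gmat' (A : Fin m → Matrix (Fin n) (Fin n) ℂ)
    (p q u v : EuclideanSpace ℂ (Fin n)) :
    (inner ℂ u (mApp (Gmat A p q) v) : ℂ)
      = (m : ℂ)⁻¹ * ∑ i, quadForm (A i)ᴴ p q * (inner ℂ u (mApp (A i) v) : ℂ)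
        - 2 * ((inner ℂ u q : ℂ) * (inner ℂ p v : ℂ)) := by
  simp only [Gmat, mApp_sub', mApp_smul', mApp_sum', inner_sub_right, inner_smul_right,
    inner_sum, mApp_outer']
  ring

private lemma inner_mApp_abs_le' (M : Matrix (Fin n) (Fin n) ℂ)
    (u v : EuclideanSpace ℂ (Fin n)) :
    ‖(inner ℂ u (mApp M v) : ℂ)‖ ≤ ‖u‖ * (specNorm M * ‖v‖) := by
  calc ‖(inner ℂ u (mApp M v) : ℂ)‖ ≤ ‖u‖ * ‖mApp M v‖ := norm_inner_le_norm _ _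
    _ ≤ ‖u‖ * (specNorm M * ‖v‖) :=
      mul_le_mul_of_nonneg_left (mApp_norm_le' M v) (norm_nonneg u)

private lemma specNorm_Gmat_le' (ν : ℝ) (hν : 0 < ν)
    (A : Fin m → Matrix (Fin n) (Fin n) ℂ)
    (hA : ∀ p q : EuclideanSpace ℂ (Fin n), ‖p‖ = 1 → ‖q‖ = 1 → specNorm (Gmat A p q) < ν)
    (p q : EuclideanSpace ℂ (Fin n)) :
    specNorm (Gmat A p q) ≤ ν * (‖p‖ * ‖q‖) := by
  have hz : specNorm (0 : Matrix (Fin n) (Fin n) ℂ) = 0 := by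
    simp only [specNorm, map_zero, norm_zero]
  rcases eq_or_ne p 0 with rfl | hp
  · have h0 : Gmat A (0 : EuclideanSpace ℂ (Fin n)) q = 0 := by
      have := Gmat_smul' A 0 1 0 q
      simpa using this
    rw [h0, hz]
    positivity
  rcases eq_or_ne q 0 with rfl | hq
  · have h0 : Gmat A p (0 : EuclideanSpace ℂ (Fin n)) = 0 := by
      have := Gmat_smul' A 1 0 p 0
      simpa using this
    rw [h0, hz]
    positivity
  · have hp' : ‖p‖ ≠ 0 := norm_ne_zero_iff.mpr hp
    have hq' : ‖q‖ ≠ 0 := norm_ne_zero_iff.mpr hq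
    set p1 : EuclideanSpace ℂ (Fin n) := ((‖p‖ : ℂ))⁻¹ • p with hp1def
    set q1 : EuclideanSpace ℂ (Fin n) := ((‖q‖ : ℂ))⁻¹ • q with hq1def
    have hp1 : ‖p1‖ = 1 := by
      rw [hp1def, norm_smul, norm_inv]
      simp only [Complex.norm_real, norm_norm]
      exact inv_mul_cancel₀ hp'
    have hq1 : ‖q1‖ = 1 := by
      rw [hq1def, norm_smul, norm_inv]
      simp only [Complex.norm_real, norm_norm]
      exact inv_mul_cancel₀ hq'
    have hlt : specNorm (Gmat A p1 q1) ≤ ν := (hA p1 q1 hp1 hq1).le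
    have hpc : ((‖p‖ : ℂ)) • p1 = p := by
      rw [hp1def, smul_smul, mul_inv_cancel₀ (by exact_mod_cast hp'), one_smul]
    have hqc : ((‖q‖ : ℂ)) • q1 = q := by
      rw [hq1def, smul_smul, mul_inv_cancel₀ (by exact_mod_cast hq'), one_smul]
    have heq : Gmat A p q = ((‖p‖ : ℂ) * (‖q‖ : ℂ)) • Gmat A p1 q1 := by
      have h2 := Gmat_smul' A ((‖p‖ : ℂ)) ((‖q‖ : ℂ)) p1 q1
      rw [hpc, hqc, Complex.conj_ofReal] at h2
      exact h2
    rw [heq, specNorm_smul']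
    have hc : ‖((‖p‖ : ℂ) * (‖q‖ : ℂ))‖ = ‖p‖ * ‖q‖ := by
      simp [norm_mul]
    rw [hc]
    have hpq : (0:ℝ) ≤ ‖p‖ * ‖q‖ := by positivity
    nlinarith [specNorm_nonneg' (Gmat A p1 q1)]

private lemma key_est' (ν : ℝ) (hν : 0 < ν)
    (A : Fin m → Matrix (Fin n) (Fin n) ℂ)
    (hA : ∀ p q : EuclideanSpace ℂ (Fin n), ‖p‖ = 1 → ‖q‖ = 1 → specNorm (Gmat A p q) < ν)
    (p q u v : EuclideanSpace ℂ (Fin n)) :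
    ‖(m : ℂ)⁻¹ * ∑ i, quadForm (A i)ᴴ p q * (inner ℂ u (mApp (A i) v) : ℂ)
        - 2 * ((inner ℂ u q : ℂ) * (inner ℂ p v : ℂ))‖
      ≤ ν * (‖p‖ * ‖q‖ * (‖u‖ * ‖v‖)) := by
  rw [← inner_mApp_Gmat']
  calc ‖(inner ℂ u (mApp (Gmat A p q) v) : ℂ)‖
      ≤ ‖u‖ * (specNorm (Gmat A p q) * ‖v‖) := inner_mApp_abs_le' _ _ _
    _ ≤ ‖u‖ * ((ν * (‖p‖ * ‖q‖)) * ‖v‖) := by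
        gcongr
        exact specNorm_Gmat_le' ν hν A hA p q
    _ = ν * (‖p‖ * ‖q‖ * (‖u‖ * ‖v‖)) := by ring

end AuxGradBound


/-- Upper bound `‖∇f(z)‖² ≤ c₂(ν, ρ) ‖h‖² ‖x‖⁴` for `z = x + h` with `‖h‖ ≤ ρ ‖x‖`,
under the uniform spectral-norm concentration hypothesis, where
`c₂(ν, ρ) = 4 (2 + ν)² (ρ² + 3ρ + 2)²`. -/


theorem grad_norm_upper_bound {n m : ℕ} (ν ρ : ℝ) (hν : 0 < ν) (hρ : 0 < ρ)
    (A : Fin m → Matrix (Fin n) (Fin n) ℂ)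
    (hA : ∀ p q : EuclideanSpace ℂ (Fin n), ‖p‖ = 1 → ‖q‖ = 1 →
      specNorm (Gmat A p q) < ν)
    (h x : EuclideanSpace ℂ (Fin n)) (hhx : ‖h‖ ≤ ρ * ‖x‖) :
    ‖wfGrad A x (x + h)‖ ^ 2
      ≤ 4 * (2 + ν) ^ 2 * (ρ ^ 2 + 3 * ρ + 2) ^ 2 * ‖h‖ ^ 2 * ‖x‖ ^ 4 := by
  set z : EuclideanSpace ℂ (Fin n) := x + h with hzdef
  set g : EuclideanSpace ℂ (Fin n) := wfGrad A x z with hgdef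
  have hconj_sum : ∀ (f f' : Fin m → ℂ),
      (m : ℂ)⁻¹ * ∑ i, starRingEnd ℂ (f i + f' i)
        = starRingEnd ℂ ((m : ℂ)⁻¹ * ∑ i, f i + (m : ℂ)⁻¹ * ∑ i, f' i) := by
    intro f f'
    simp [map_sum, _root_.map_add, _root_.map_mul, Finset.sum_add_distrib, mul_add, map_inv₀]
  have hinner : ∀ u : EuclideanSpace ℂ (Fin n), (inner ℂ u g : ℂ)
      = (((m : ℂ)⁻¹ * ∑ i, quadForm (A i)ᴴ h z * (inner ℂ u (mApp (A i) z) : ℂ))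
          + ((m : ℂ)⁻¹ * ∑ i, quadForm (A i)ᴴ x h * (inner ℂ u (mApp (A i) z) : ℂ)))
        + starRingEnd ℂ
          (((m : ℂ)⁻¹ * ∑ i, quadForm (A i)ᴴ h z * (inner ℂ z (mApp (A i) u) : ℂ))
            + ((m : ℂ)⁻¹ * ∑ i, quadForm (A i)ᴴ x h * (inner ℂ z (mApp (A i) u) : ℂ))) := by
    intro u
    have hsum : ∀ i : Fin m,
        (inner ℂ u ((quadForm (A i)ᴴ z z - quadForm (A i)ᴴ x x) • mApp (A i) z
          + (quadForm (A i) z z - quadForm (A i) x x) • mApp (A i)ᴴ z) : ℂ)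
        = (quadForm (A i)ᴴ h z * (inner ℂ u (mApp (A i) z) : ℂ)
            + quadForm (A i)ᴴ x h * (inner ℂ u (mApp (A i) z) : ℂ))
          + starRingEnd ℂ (quadForm (A i)ᴴ h z * (inner ℂ z (mApp (A i) u) : ℂ)
            + quadForm (A i)ᴴ x h * (inner ℂ z (mApp (A i) u) : ℂ)) := by
      intro i
      have e1 : quadForm (A i)ᴴ z z - quadForm (A i)ᴴ x x
          = quadForm (A i)ᴴ h z + quadForm (A i)ᴴ x h := by
        have := quadForm_delta' (A i)ᴴ x h
        rw [← hzdef] at this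
        exact this
      have e2 : quadForm (A i) z z - quadForm (A i) x x
          = starRingEnd ℂ (quadForm (A i)ᴴ z z - quadForm (A i)ᴴ x x) := by
        rw [map_sub, quadForm_conj', quadForm_conj']
        simp
      have e3 : (inner ℂ u (mApp (A i)ᴴ z) : ℂ)
          = starRingEnd ℂ (inner ℂ z (mApp (A i) u) : ℂ) := inner_mApp_conjT' _ _ _
      rw [inner_add_right, inner_smul_right, inner_smul_right, e2, e1, e3, ← _root_.map_mul]
      congr 1
      · ring
      · congr 1
        ring
    rw [hgdef, wfGrad]
    rw [inner_smul_right, inner_sum]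
    rw [Finset.sum_congr rfl fun i _ => hsum i]
    rw [Finset.sum_add_distrib, mul_add]
    congr 1
    · rw [Finset.sum_add_distrib, mul_add]
    · exact hconj_sum _ _
  have habsE : ∀ p q u v : EuclideanSpace ℂ (Fin n),
      ‖(m : ℂ)⁻¹ * ∑ i, quadForm (A i)ᴴ p q * (inner ℂ u (mApp (A i) v) : ℂ)‖
        ≤ (2 + ν) * (‖p‖ * ‖q‖ * (‖u‖ * ‖v‖)) := by
    intro p q u v
    have h1 := key_est' ν hν A hA p q u v
    have h2 : ‖2 * ((inner ℂ u q : ℂ) * (inner ℂ p v : ℂ))‖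
        ≤ 2 * (‖p‖ * ‖q‖ * (‖u‖ * ‖v‖)) := by
      rw [norm_mul, norm_mul, Complex.norm_two]
      have c1 : ‖(inner ℂ u q : ℂ)‖ ≤ ‖u‖ * ‖q‖ := by
        exact norm_inner_le_norm _ _
      have c2 : ‖(inner ℂ p v : ℂ)‖ ≤ ‖p‖ * ‖v‖ := by
        exact norm_inner_le_norm _ _
      have c3 := mul_le_mul c1 c2 (norm_nonneg _) (by positivity)
      nlinarith
    calc ‖(m : ℂ)⁻¹ * ∑ i, quadForm (A i)ᴴ p q * (inner ℂ u (mApp (A i) v) : ℂ)‖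
        = ‖((m : ℂ)⁻¹ * ∑ i, quadForm (A i)ᴴ p q * (inner ℂ u (mApp (A i) v) : ℂ)
            - 2 * ((inner ℂ u q : ℂ) * (inner ℂ p v : ℂ)))
          + 2 * ((inner ℂ u q : ℂ) * (inner ℂ p v : ℂ))‖ := by
          congr 1
          ring
      _ ≤ ‖(m : ℂ)⁻¹ * ∑ i, quadForm (A i)ᴴ p q * (inner ℂ u (mApp (A i) v) : ℂ)
            - 2 * ((inner ℂ u q : ℂ) * (inner ℂ p v : ℂ))‖
          + ‖2 * ((inner ℂ u q : ℂ) * (inner ℂ p v : ℂ))‖ := norm_add_le _ _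
      _ ≤ ν * (‖p‖ * ‖q‖ * (‖u‖ * ‖v‖)) + 2 * (‖p‖ * ‖q‖ * (‖u‖ * ‖v‖)) := add_le_add h1 h2
      _ = (2 + ν) * (‖p‖ * ‖q‖ * (‖u‖ * ‖v‖)) := by ring
  have hbound : ∀ u : EuclideanSpace ℂ (Fin n),
      ‖(inner ℂ u g : ℂ)‖ ≤ (2 * (2 + ν) * (‖h‖ * ‖z‖ * (‖z‖ + ‖x‖))) * ‖u‖ := by
    intro u
    rw [hinner u]
    have b1 := habsE h z u z
    have b2 := habsE x h u z
    have b3 := habsE h z z u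
    have b4 := habsE x h z u
    refine le_trans (norm_add_le _ _) ?_
    rw [Complex.norm_conj]
    refine le_trans (add_le_add (norm_add_le _ _) (norm_add_le _ _)) ?_
    nlinarith [b1, b2, b3, b4]
  have hselfabs : ‖(inner ℂ g g : ℂ)‖ = ‖g‖ ^ 2 := by
    rw [inner_self_eq_norm_sq_to_K]
    simp [← Complex.ofReal_pow]
  have hCnn : (0:ℝ) ≤ 2 * (2 + ν) * (‖h‖ * ‖z‖ * (‖z‖ + ‖x‖)) := by
    have : (0:ℝ) ≤ ‖h‖ * ‖z‖ * (‖z‖ + ‖x‖) := by positivity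
    nlinarith
  have hgB : ‖g‖ ≤ 2 * (2 + ν) * (‖h‖ * ‖z‖ * (‖z‖ + ‖x‖)) := by
    have hb := hbound g
    rw [hselfabs] at hb
    rcases eq_or_lt_of_le (norm_nonneg g) with h0 | h0
    · rw [← h0]; exact hCnn
    · nlinarith
  have hzx : ‖z‖ ≤ (1 + ρ) * ‖x‖ := by
    calc ‖z‖ = ‖x + h‖ := by rw [hzdef]
      _ ≤ ‖x‖ + ‖h‖ := norm_add_le _ _
      _ ≤ ‖x‖ + ρ * ‖x‖ := by linarith
      _ = (1 + ρ) * ‖x‖ := by ring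
  have hkey : ‖h‖ * ‖z‖ * (‖z‖ + ‖x‖) ≤ (ρ ^ 2 + 3 * ρ + 2) * (‖h‖ * ‖x‖ ^ 2) := by
    have h1 : ‖z‖ + ‖x‖ ≤ (2 + ρ) * ‖x‖ := by linarith
    have h2 : ‖z‖ * (‖z‖ + ‖x‖) ≤ ((1 + ρ) * ‖x‖) * ((2 + ρ) * ‖x‖) :=
      mul_le_mul hzx h1 (by positivity) (by positivity)
    nlinarith [norm_nonneg h, mul_le_mul_of_nonneg_left h2 (norm_nonneg h)]
  have hfin : ‖g‖ ≤ 2 * (2 + ν) * ((ρ ^ 2 + 3 * ρ + 2) * (‖h‖ * ‖x‖ ^ 2)) := by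
    refine hgB.trans ?_
    have h2ν : (0:ℝ) ≤ 2 * (2 + ν) := by linarith
    nlinarith [hkey]
  calc ‖g‖ ^ 2 ≤ (2 * (2 + ν) * ((ρ ^ 2 + 3 * ρ + 2) * (‖h‖ * ‖x‖ ^ 2))) ^ 2 :=
      pow_le_pow_left₀ (norm_nonneg g) hfin 2
    _ = 4 * (2 + ν) ^ 2 * (ρ ^ 2 + 3 * ρ + 2) ^ 2 * ‖h‖ ^ 2 * ‖x‖ ^ 4 := by ring
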